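/- Let α, β be inner functions and k ≥ 1. For each l ∈ {0, 1, …, k−1}, the rank-one operators k̃_0^β ⊗ k_{0,l}^α and k_0^β ⊗ k̃_{0,l}^α from K_α to K_β belong to 𝒮_k(α,β). Explicitly, k̃_0^β ⊗ k_{0,l}^α = U_φ^{α,β} with φ(z) = β(z^k) · l! · conj(z)^{l+k}, and k_0^β ⊗ k̃_{0,l}^α = U_ψ^{α,β} with ψ(z) = conj(α(z)) · l! · z^{l+1}. -/

import Mathlib

open MeasureTheory Complex

noncomputable section

instance : Fact ((0:ℝ) < 1) := ⟨one_pos⟩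

/-- The unit circle 𝕋, realized additively. -/
abbrev Circ := AddCircle (1:ℝ)
/-- Normalized Haar (Lebesgue) measure on the circle. -/
abbrev μc : Measure Circ := AddCircle.haarAddCircle
/-- The Lebesgue space L²(𝕋). -/
abbrev L2 := Lp ℂ 2 μc

/-- The basis element "z^n" of L²(𝕋). -/
def e (n : ℤ) : L2 := fourierLp 2 n

/-- The Hardy space H², the closed span of the nonnegative powers of z. -/
def H2 : Submodule ℂ L2 :=
  (Submodule.span ℂ (Set.range fun n : ℕ => e n)).topologicalClosure

/-- The family θ·z^n, n ≥ 0, whose closed span is (the closure of) θH² for inner θ. -/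
def thetaSet (θ : Circ → ℂ) : Set L2 :=
  {g | ∃ n : ℕ, ⇑g =ᵐ[μc] fun x => θ x * fourier n x}

/-- The model space K_θ = H² ⊖ θH². -/
def Kmodel (θ : Circ → ℂ) : Submodule ℂ L2 :=
  H2 ⊓ (Submodule.span ℂ (thetaSet θ))ᗮ

theorem Kmodel_isClosed (θ : Circ → ℂ) : IsClosed (Kmodel θ : Set L2) := by
  have h1 : IsClosed (H2 : Set L2) := Submodule.isClosed_topologicalClosure _
  have h2 : IsClosed ((Submodule.span ℂ (thetaSet θ))ᗮ : Set L2) :=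
    Submodule.isClosed_orthogonal _
  have h3 : (Kmodel θ : Set L2) = (H2 : Set L2) ∩ ((Submodule.span ℂ (thetaSet θ))ᗮ : Set L2) := rfl
  rw [h3]; exact h1.inter h2

instance (θ : Circ → ℂ) : CompleteSpace (Kmodel θ) :=
  (Kmodel_isClosed θ).completeSpace_coe

instance : CompleteSpace H2 :=
  (Submodule.isClosed_topologicalClosure _).completeSpace_coe

/-- The Riesz projection onto H², as an operator on L². -/
def PH2 : L2 →L[ℂ] L2 := H2.subtypeL.comp H2.orthogonalProjectionOnto

/-- The orthogonal projection P_θ onto the model space K_θ, as an operator on L². -/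
def Pmod (θ : Circ → ℂ) : L2 →L[ℂ] L2 :=
  (Kmodel θ).subtypeL.comp (Kmodel θ).orthogonalProjectionOnto

/-- The rank-one operator (u ⊗ v) f = ⟨f, v⟩ u (inner product linear in f). -/
def rankOne (u v : L2) : L2 →L[ℂ] L2 :=
  (ContinuousLinearMap.toSpanSingleton ℂ u).comp (innerSL ℂ v)

/-- θ is (the boundary function of) an inner function: essentially bounded, of modulus
one a.e., with vanishing negative Fourier coefficients. -/
def IsInnerFun (θ : Circ → ℂ) : Prop :=
  MemLp θ ⊤ μc ∧ (∀ᵐ x ∂μc, ‖θ x‖ = 1) ∧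
    ∀ n : ℤ, n < 0 → ∫ x, θ x * (starRingEnd ℂ) (fourier n x) ∂μc = 0

/-- The kernel functions k_{0,j}^θ = P_θ(j! z^j). -/
def kker (θ : Circ → ℂ) (j : ℕ) : L2 := Pmod θ ((j.factorial : ℂ) • e j)

/-- The compressed shift S_θ = P_θ M_z P_θ (as an operator on L², vanishing on K_θᗮ),
built from the multiplication-by-z operator Mz. -/
def Smod (θ : Circ → ℂ) (Mz : L2 →L[ℂ] L2) : L2 →L[ℂ] L2 :=
  (Pmod θ).comp (Mz.comp (Pmod θ))

/-- W is the k-th order slant shift W_k : z^n ↦ z^(n/k) if k ∣ n, else 0. -/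
def IsSlantShift (k : ℕ) (W : L2 →L[ℂ] L2) : Prop :=
  ∀ n : ℤ, W (e n) = if (k:ℤ) ∣ n then e (n / k) else 0

/-- Mz is the multiplication by z on L². -/
def IsMz (Mz : L2 →L[ℂ] L2) : Prop :=
  ∀ f : L2, ⇑(Mz f) =ᵐ[μc] fun x => fourier 1 x * f x

/-- U agrees with the compression U_φ^{α,β} = P_β W_k(φ ·) on K_α^∞ = K_α ∩ H^∞. -/
def UphiRel (W : L2 →L[ℂ] L2) (α β : Circ → ℂ) (φ : Circ → ℂ) (U : L2 →L[ℂ] L2) : Prop :=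
  ∀ f : L2, f ∈ Kmodel α → MemLp (⇑f) ⊤ μc →
    ∀ g : L2, (⇑g =ᵐ[μc] fun x => φ x * f x) → U f = Pmod β (W g)

/-- U belongs to 𝒮_k(α,β): it is a bounded extension of some U_φ^{α,β}, φ ∈ L². -/
def InSk (W : L2 →L[ℂ] L2) (α β : Circ → ℂ) (U : L2 →L[ℂ] L2) : Prop :=
  ∃ φ : Circ → ℂ, MemLp φ 2 μc ∧ UphiRel W α β φ U

/-- Sstar acts as the backward shift on H²: S* f = P(conj z · f). -/
def IsBackwardShift (Sstar : L2 →L[ℂ] L2) : Prop :=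
  ∀ f : L2, f ∈ H2 → ∀ g : L2,
    (⇑g =ᵐ[μc] fun x => (starRingEnd ℂ) (fourier 1 x) * f x) → Sstar f = PH2 g

/-- C is the conjugation C_θ f = θ · conj(z f) on L². -/
def IsConjOp (θ : Circ → ℂ) (C : L2 → L2) : Prop :=
  ∀ f : L2, ⇑(C f) =ᵐ[μc] fun x => θ x * (starRingEnd ℂ) (fourier 1 x * f x)
section Aux
open ComplexConjugate Filter

local notation "⟪" x ", " y "⟫" => @inner ℂ _ _ x y

lemma inner_eq_int (u v : L2) : ⟪u, v⟫ = ∫ x, conj (u x) * v x ∂μc := by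
  rw [MeasureTheory.L2.inner_def]; simp only [RCLike.inner_apply, mul_comm]

lemma coeFn_e (n : ℤ) : ⇑(e n) =ᵐ[μc] fourier n := coeFn_fourierLp 2 n

lemma inner_e_e (a b : ℤ) : ⟪e a, e b⟫ = if a = b then 1 else 0 :=
  orthonormal_iff_ite.mp orthonormal_fourier a b

lemma norm_fourier (n : ℤ) (x : Circ) : ‖fourier n x‖ = 1 := Circle.norm_coe _

lemma fourier_mul_conj_self (n : ℤ) (x : Circ) : fourier n x * conj (fourier n x) = 1 := by
  rw [Complex.mul_conj]
  norm_cast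
  rw [← Complex.sq_norm]
  have := norm_fourier n x
  rw [this]; norm_num

lemma conj_mul_self_fourier (n : ℤ) (x : Circ) : conj (fourier n x) * fourier n x = 1 := by
  rw [mul_comm]; exact fourier_mul_conj_self n x

lemma fourier_ksmul (k : ℕ) (n : ℤ) (x : Circ) :
    fourier n ((k : ℤ) • x) = fourier ((k : ℤ) * n) x := by
  rw [fourier_apply, fourier_apply, smul_smul, mul_comm]

lemma inner_e_eq_fourierCoeff (n : ℤ) (u : L2) : ⟪e n, u⟫ = fourierCoeff (⇑u) n := by
  rw [inner_eq_int, fourierCoeff]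
  apply integral_congr_ae
  filter_upwards [coeFn_e n] with x hx
  rw [hx, ← fourier_neg, smul_eq_mul]

lemma hasSum_e (u : L2) : HasSum (fun n : ℤ => ⟪e n, u⟫ • e n) u := by
  have h := hasSum_fourier_series_L2 u
  have he : (fun n : ℤ => ⟪e n, u⟫ • e n) = fun i => fourierCoeff (⇑u) i • fourierLp 2 i := by
    funext n; rw [inner_e_eq_fourierCoeff]; rfl
  rw [he]; exact h

lemma ext_coeff {a b : L2} (h : ∀ n : ℤ, ⟪e n, a⟫ = ⟪e n, b⟫) : a = b := by
  have h1 := hasSum_e a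
  have h2 := hasSum_e b
  simp_rw [h] at h1
  exact h1.unique h2

end Aux
section Aux2
open ComplexConjugate Filter

local notation "⟪" x ", " y "⟫" => @inner ℂ _ _ x y

lemma memℒp_unimod_mul_left {g f : Circ → ℂ} {p : ENNReal}
    (hg : AEStronglyMeasurable g μc) (h1 : ∀ᵐ x ∂μc, ‖g x‖ = 1)
    (hf : MemLp f p μc) : MemLp (fun x => g x * f x) p μc := by
  refine ⟨hg.mul hf.1, ?_⟩
  have he : eLpNorm (fun x => g x * f x) p μc = eLpNorm f p μc := by
    apply eLpNorm_congr_norm_ae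
    filter_upwards [h1] with x hx
    rw [norm_mul, hx, one_mul]
  rw [he]; exact hf.2

lemma memℒp_unimod_mul_right {g f : Circ → ℂ} {p : ENNReal}
    (hg : AEStronglyMeasurable g μc) (h1 : ∀ᵐ x ∂μc, ‖g x‖ = 1)
    (hf : MemLp f p μc) : MemLp (fun x => f x * g x) p μc := by
  have := memℒp_unimod_mul_left hg h1 hf
  simpa [mul_comm] using this

lemma memℒp_conj {f : Circ → ℂ} {p : ENNReal} (hf : MemLp f p μc) :
    MemLp (fun x => conj (f x)) p μc := by
  refine ⟨Complex.continuous_conj.comp_aestronglyMeasurable hf.1, ?_⟩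
  have he : eLpNorm (fun x => conj (f x)) p μc = eLpNorm f p μc := by
    apply eLpNorm_congr_norm_ae
    filter_upwards with x
    simp
  rw [he]; exact hf.2

lemma memℒp_theta_e {θ : Circ → ℂ} (hθ : MemLp θ ⊤ μc) (n : ℤ) :
    MemLp (fun x => θ x * fourier n x) 2 μc := by
  refine MemLp.mono_exponent ?_ (le_top)
  exact memℒp_unimod_mul_right (map_continuous (fourier n)).aestronglyMeasurable
    (Eventually.of_forall fun x => norm_fourier n x) hθ

/-- The element of `L²` representing `θ·zⁿ`. -/
def vθ {θ : Circ → ℂ} (hθ : MemLp θ ⊤ μc) (n : ℕ) : L2 :=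
  (memℒp_theta_e hθ n).toLp _

lemma vθ_coe {θ : Circ → ℂ} (hθ : MemLp θ ⊤ μc) (n : ℕ) :
    ⇑(vθ hθ n) =ᵐ[μc] fun x => θ x * fourier (n : ℤ) x := (memℒp_theta_e hθ n).coeFn_toLp

lemma vθ_mem {θ : Circ → ℂ} (hθ : MemLp θ ⊤ μc) (n : ℕ) : vθ hθ n ∈ thetaSet θ :=
  ⟨n, vθ_coe hθ n⟩

lemma e_mem_H2 (n : ℕ) : e n ∈ H2 :=
  Submodule.le_topologicalClosure _ (Submodule.subset_span ⟨n, rfl⟩)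

lemma inner_e_zero_of_H2 {u : L2} (hu : u ∈ H2) {n : ℤ} (hn : n < 0) : ⟪e n, u⟫ = 0 := by
  have hker : H2 ≤ (innerSL ℂ (e n)).ker := by
    apply Submodule.topologicalClosure_minimal
    · rw [Submodule.span_le]
      rintro _ ⟨m, rfl⟩
      simp only [SetLike.mem_coe, LinearMap.mem_ker, ContinuousLinearMap.coe_coe, innerSL_apply_apply]
      have : n ≠ (m : ℤ) := by omega
      rw [inner_e_e, if_neg this]
    · exact ContinuousLinearMap.isClosed_ker (innerSL ℂ (e n))
  exact hker hu

lemma mem_H2_of_coeff {u : L2} (h : ∀ n : ℤ, n < 0 → ⟪e n, u⟫ = 0) : u ∈ H2 := by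
  have hs := hasSum_e u
  have hmem : ∀ n : ℤ, (⟪e n, u⟫ • e n) ∈ H2 := by
    intro n
    rcases lt_or_ge n 0 with hn | hn
    · rw [h n hn, zero_smul]; exact zero_mem _
    · refine Submodule.smul_mem _ _ ?_
      lift n to ℕ using hn with m
      exact e_mem_H2 m
  exact (Submodule.isClosed_topologicalClosure _).mem_of_tendsto hs
    (Eventually.of_forall fun s => Submodule.sum_mem _ fun n _ => hmem n)

lemma inner_theta_zero {θ : Circ → ℂ} {u : L2}
    (hu : u ∈ (Submodule.span ℂ (thetaSet θ))ᗮ) {v : L2} (hv : v ∈ thetaSet θ) : ⟪v, u⟫ = 0 :=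
  (Submodule.mem_orthogonal _ _).mp hu v (Submodule.subset_span hv)

lemma mem_orth_span_of {θ : Circ → ℂ} {u : L2}
    (h : ∀ v ∈ thetaSet θ, ⟪v, u⟫ = 0) : u ∈ (Submodule.span ℂ (thetaSet θ))ᗮ := by
  rw [Submodule.mem_orthogonal]
  intro x hx
  induction hx using Submodule.span_induction with
  | mem v hv => exact h v hv
  | zero => exact inner_zero_left _
  | add a b _ _ ha hb => rw [inner_add_left, ha, hb, add_zero]
  | smul c a _ ha => rw [inner_smul_left, ha, mul_zero]

end Aux2
section Aux3
open ComplexConjugate Filter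

local notation "⟪" x ", " y "⟫" => @inner ℂ _ _ x y

lemma Pmod_mem (θ : Circ → ℂ) (u : L2) : Pmod θ u ∈ Kmodel θ :=
  ((Kmodel θ).orthogonalProjectionOnto u).2

lemma Pmod_of_mem {θ : Circ → ℂ} {u : L2} (h : u ∈ Kmodel θ) : Pmod θ u = u :=
  Submodule.starProjection_eq_self_iff.mpr h

lemma inner_Pmod_left (θ : Circ → ℂ) (u v : L2) : ⟪Pmod θ u, v⟫ = ⟪u, Pmod θ v⟫ :=
  Submodule.inner_starProjection_left_eq_right _ u v

lemma Pmod_eq {θ : Circ → ℂ} {u v : L2} (hv : v ∈ Kmodel θ)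
    (ho : ∀ w ∈ Kmodel θ, ⟪w, u⟫ = ⟪w, v⟫) : Pmod θ u = v := by
  refine Submodule.eq_starProjection_of_mem_of_inner_eq_zero hv ?_
  intro w hw
  rw [inner_sub_left, sub_eq_zero, ← inner_conj_symm, ho w hw, inner_conj_symm]

lemma kker_mem (θ : Circ → ℂ) (j : ℕ) : kker θ j ∈ Kmodel θ := Pmod_mem θ _

/-- Membership conditions extracted from membership in the model space. -/
lemma Kmodel_coeff_zero {θ : Circ → ℂ} {u : L2} (hu : u ∈ Kmodel θ) {n : ℤ} (hn : n < 0) :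
    ⟪e n, u⟫ = 0 := inner_e_zero_of_H2 hu.1 hn

lemma Kmodel_theta_zero {θ : Circ → ℂ} (hθ : MemLp θ ⊤ μc) {u : L2} (hu : u ∈ Kmodel θ)
    (n : ℕ) : ∫ x, conj (θ x * fourier (n : ℤ) x) * u x ∂μc = 0 := by
  have h0 : ⟪vθ hθ n, u⟫ = 0 := inner_theta_zero hu.2 (vθ_mem hθ n)
  rw [inner_eq_int] at h0
  rw [← h0]
  apply integral_congr_ae
  filter_upwards [vθ_coe hθ n] with x hx
  rw [hx]

/-- `∫ fourier m · u = 0` for `m > 0` when `u ∈ H²`. -/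
lemma int_fourier_H2 {u : L2} (hu : u ∈ H2) {m : ℤ} (hm : 0 < m) :
    ∫ x, fourier m x * u x ∂μc = 0 := by
  have h := inner_e_zero_of_H2 hu (show -m < 0 by omega)
  rw [inner_eq_int] at h
  rw [← h]
  apply integral_congr_ae
  filter_upwards [coeFn_e (-m)] with x hx
  rw [hx, fourier_neg, Complex.conj_conj]

end Aux3
section Aux4
open ComplexConjugate Filter

local notation "⟪" x ", " y "⟫" => @inner ℂ _ _ x y

lemma conj_mul_self_of_norm_one {z : ℂ} (h : ‖z‖ = 1) : conj z * z = 1 := by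
  rw [mul_comm, Complex.mul_conj]
  have : Complex.normSq z = 1 := by
    rw [Complex.normSq_eq_norm_sq, h]; norm_num
  rw [this]; norm_num

lemma mul_conj_self_of_norm_one {z : ℂ} (h : ‖z‖ = 1) : z * conj z = 1 := by
  rw [mul_comm]; exact conj_mul_self_of_norm_one h

lemma C_mem_Kmodel {θ : Circ → ℂ} {C : L2 → L2} (hθ : IsInnerFun θ) (hC : IsConjOp θ C)
    {w : L2} (hw : w ∈ Kmodel θ) : C w ∈ Kmodel θ := by
  constructor
  · apply mem_H2_of_coeff
    intro n hn
    have hm : (((-(n+1)).toNat : ℤ)) = -(n+1) := Int.toNat_of_nonneg (by omega)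
    have h0 := Kmodel_theta_zero hθ.1 hw ((-(n+1)).toNat)
    calc ⟪e n, C w⟫
        = ∫ x, conj (conj (θ x * fourier (((-(n+1)).toNat : ℤ)) x) * w x) ∂μc := by
          rw [inner_eq_int]
          apply integral_congr_ae
          filter_upwards [coeFn_e n, hC w] with x h1 h2
          rw [h1, h2, hm]
          simp only [map_mul, Complex.conj_conj, ← fourier_neg, neg_neg]
          have hf : fourier (-(n+1)) x = fourier (-n) x * fourier (-1) x := by
            rw [← fourier_add]; congr 1; ring
          rw [hf]; ring
      _ = conj (∫ x, conj (θ x * fourier (((-(n+1)).toNat : ℤ)) x) * w x ∂μc) :=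
          integral_conj
      _ = 0 := by rw [h0, map_zero]
  · apply mem_orth_span_of
    rintro v ⟨n, hv⟩
    have h0 := int_fourier_H2 hw.1 (show (0:ℤ) < (n:ℤ) + 1 by positivity)
    calc ⟪v, C w⟫
        = ∫ x, conj (fourier ((n:ℤ)+1) x * w x) ∂μc := by
          rw [inner_eq_int]
          apply integral_congr_ae
          filter_upwards [hv, hC w, hθ.2.1] with x h1 h2 h3
          rw [h1, h2]
          simp only [map_mul, Complex.conj_conj]
          have hθ1 : conj (θ x) * θ x = 1 := conj_mul_self_of_norm_one h3
          have he1 : conj (fourier 1 x) * fourier 1 x = 1 := conj_mul_self_fourier 1 x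
          have hf : fourier ((n:ℤ)+1) x = fourier (n:ℤ) x * fourier 1 x := fourier_add
          rw [hf, map_mul]
          linear_combination (conj (fourier (n:ℤ) x) * conj (fourier 1 x) *
              conj (w x)) * hθ1
      _ = conj (∫ x, fourier ((n:ℤ)+1) x * w x ∂μc) := integral_conj
      _ = 0 := by rw [h0, map_zero]

lemma inner_C_C {θ : Circ → ℂ} {C : L2 → L2} (hmod : ∀ᵐ x ∂μc, ‖θ x‖ = 1)
    (hC : IsConjOp θ C) (a b : L2) : ⟪C a, C b⟫ = ⟪b, a⟫ := by
  rw [inner_eq_int, inner_eq_int]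
  apply integral_congr_ae
  filter_upwards [hC a, hC b, hmod] with x h1 h2 h3
  rw [h1, h2]
  simp only [map_mul, Complex.conj_conj]
  have hθ1 : conj (θ x) * θ x = 1 := conj_mul_self_of_norm_one h3
  have he1 : fourier 1 x * conj (fourier 1 x) = 1 := fourier_mul_conj_self 1 x
  linear_combination (a x * conj (b x) * (fourier 1 x * conj (fourier 1 x))) * hθ1 +
    (a x * conj (b x)) * he1

lemma C_C {θ : Circ → ℂ} {C : L2 → L2} (hmod : ∀ᵐ x ∂μc, ‖θ x‖ = 1)
    (hC : IsConjOp θ C) (u : L2) : C (C u) = u := by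
  apply Lp.ext
  filter_upwards [hC (C u), hC u, hmod] with x h1 h2 h3
  rw [h1, h2]
  simp only [map_mul, Complex.conj_conj]
  have hθ1 : θ x * conj (θ x) = 1 := mul_conj_self_of_norm_one h3
  have he1 : conj (fourier 1 x) * fourier 1 x = 1 := conj_mul_self_fourier 1 x
  linear_combination (u x * (conj (fourier 1 x) * fourier 1 x)) * hθ1 + u x * he1

end Aux4
section Aux5
open ComplexConjugate Filter

local notation "⟪" x ", " y "⟫" => @inner ℂ _ _ x y

/-- The map `x ↦ k • x` on the circle is measure preserving. -/
lemma mpk (k : ℕ) (hk : 1 ≤ k) : MeasurePreserving (fun x : Circ => (k : ℤ) • x) μc μc :=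
  MeasureTheory.Measure.measurePreserving_zsmul μc (by positivity)

/-- The composition operator `u ↦ u(k·)` on `L²` (the adjoint of the slant shift). -/
def Wst (k : ℕ) (hk : 1 ≤ k) : L2 →L[ℂ] L2 :=
  (Lp.compMeasurePreservingₗᵢ ℂ _ (mpk k hk)).toContinuousLinearMap

lemma Wst_coe (k : ℕ) (hk : 1 ≤ k) (u : L2) :
    ⇑(Wst k hk u) =ᵐ[μc] fun x => u ((k : ℤ) • x) :=
  Lp.coeFn_compMeasurePreserving u (mpk k hk)

lemma ae_comp_k (k : ℕ) (hk : 1 ≤ k) {g g' : Circ → ℂ} (h : g =ᵐ[μc] g') :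
    (fun x => g ((k : ℤ) • x)) =ᵐ[μc] fun x => g' ((k : ℤ) • x) := by
  refine MeasureTheory.ae_eq_comp (μ := μc) (f := fun x : Circ => (k : ℤ) • x)
    ((mpk k hk).measurable.aemeasurable) ?_
  rw [(mpk k hk).map_eq]
  exact h

lemma Wst_e (k : ℕ) (hk : 1 ≤ k) (n : ℤ) : Wst k hk (e n) = e ((k : ℤ) * n) := by
  apply Lp.ext
  have h1 := Wst_coe k hk (e n)
  have h2 := ae_comp_k k hk (coeFn_e n)
  filter_upwards [h1, h2, coeFn_e ((k : ℤ) * n)] with x hx1 hx2 hx3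
  rw [hx1, hx2, hx3, fourier_ksmul]

lemma W_eq_adjoint {k : ℕ} (hk : 1 ≤ k) {W : L2 →L[ℂ] L2} (hW : IsSlantShift k W) :
    W = ContinuousLinearMap.adjoint (Wst k hk) := by
  have hd : Dense ((Submodule.span ℂ (Set.range fun n : ℤ => e n) : Submodule ℂ L2) : Set L2) := by
    have h := fourierBasis (T := 1) |>.dense_span
    rw [coe_fourierBasis] at h
    rw [Submodule.dense_iff_topologicalClosure_eq_top]
    exact h
  refine ContinuousLinearMap.ext_on hd ?_
  rintro _ ⟨m, rfl⟩
  apply ext_coeff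
  intro n
  rw [ContinuousLinearMap.adjoint_inner_right, Wst_e, hW m]
  by_cases hd' : (k : ℤ) ∣ m
  · rw [if_pos hd', inner_e_e, inner_e_e]
    have hiff : (n = m / k) ↔ ((k : ℤ) * n = m) := by
      constructor
      · rintro rfl; exact Int.mul_ediv_cancel' hd'
      · intro h; rw [← h, Int.mul_ediv_cancel_left]; positivity
    by_cases hc : n = m / k
    · rw [if_pos hc, if_pos (hiff.mp hc)]
    · rw [if_neg hc, if_neg (fun h => hc (hiff.mpr h))]
  · rw [if_neg hd', inner_zero_right, inner_e_e, if_neg]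
    intro h
    exact hd' ⟨n, h.symm⟩

lemma inner_W {k : ℕ} (hk : 1 ≤ k) {W : L2 →L[ℂ] L2} (hW : IsSlantShift k W) (w g : L2) :
    ⟪w, W g⟫ = ⟪Wst k hk w, g⟫ := by
  rw [W_eq_adjoint hk hW, ContinuousLinearMap.adjoint_inner_right]

/-- The key summation: for `f, h ∈ H²` and `ψ' =ᵃᵉ z^l conj f` with `0 ≤ l < k`,
`⟪ψ', h(z^k)⟫ = ⟪e 0, h⟫ ⟪e l, f⟫`. -/
lemma key_sum (k : ℕ) (hk : 1 ≤ k) {l : ℕ} (hl : l < k) {f ψ' h : L2}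
    (hf : f ∈ H2) (hψ : ⇑ψ' =ᵐ[μc] fun x => fourier (l : ℤ) x * conj (f x))
    (hh : h ∈ H2) :
    ⟪ψ', Wst k hk h⟫ = ⟪e 0, h⟫ * ⟪e l, f⟫ := by
  set T : L2 →L[ℂ] ℂ := (innerSL ℂ ψ').comp (Wst k hk) with hT
  have hTe : ∀ n : ℤ, T (e n) = ⟪e (l - k * n), f⟫ := by
    intro n
    have : T (e n) = ⟪ψ', e ((k : ℤ) * n)⟫ := by
      rw [hT]; simp only [ContinuousLinearMap.comp_apply, innerSL_apply_apply]
      rw [Wst_e]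
    rw [this, inner_eq_int, inner_eq_int]
    apply integral_congr_ae
    filter_upwards [hψ, coeFn_e ((k : ℤ) * n), coeFn_e (l - k * n)] with x h1 h2 h3
    rw [h1, h2, h3]
    simp only [map_mul, Complex.conj_conj, ← fourier_neg]
    have : fourier (-(l : ℤ)) x * fourier ((k : ℤ) * n) x = fourier (-(l - k * n)) x := by
      rw [← fourier_add]; congr 1; ring
    calc fourier (-(l:ℤ)) x * f x * fourier ((k:ℤ) * n) x
        = (fourier (-(l : ℤ)) x * fourier ((k : ℤ) * n) x) * f x := by ring
      _ = fourier (-(l - k * n)) x * f x := by rw [this]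
  have hs : HasSum (fun n : ℤ => ⟪e n, h⟫ * T (e n)) (T h) := by
    have hmap := (hasSum_e h).mapL T
    simp only [ContinuousLinearMap.map_smul, smul_eq_mul] at hmap
    exact hmap
  have hz : ∀ n : ℤ, n ≠ 0 → ⟪e n, h⟫ * T (e n) = 0 := by
    intro n hn
    rcases lt_or_gt_of_ne hn with hlt | hgt
    · rw [inner_e_zero_of_H2 hh hlt, zero_mul]
    · have hkn : (k : ℤ) * 1 ≤ (k : ℤ) * n :=
        mul_le_mul_of_nonneg_left (by omega) (by positivity)
      rw [hTe, inner_e_zero_of_H2 hf (by omega : (l : ℤ) - k * n < 0), mul_zero]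
  have hs' : HasSum (fun n : ℤ => ⟪e n, h⟫ * T (e n)) (⟪e 0, h⟫ * T (e 0)) := by
    have heq : (fun n : ℤ => ⟪e n, h⟫ * T (e n)) =
        fun n : ℤ => if n = 0 then ⟪e 0, h⟫ * T (e 0) else 0 := by
      funext n
      by_cases hn : n = 0
      · rw [if_pos hn, hn]
      · rw [if_neg hn, hz n hn]
    rw [heq]
    exact hasSum_ite_eq 0 _
  have hfin := hs.unique hs'
  have hgoal : ⟪ψ', Wst k hk h⟫ = T h := rfl
  rw [hgoal, hfin, hTe 0]
  norm_num
end Aux5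
section Aux6
open ComplexConjugate Filter

local notation "⟪" x ", " y "⟫" => @inner ℂ _ _ x y

lemma kker_def (θ : Circ → ℂ) (j : ℕ) :
    kker θ j = Pmod θ ((j.factorial : ℂ) • e (j : ℤ)) := rfl

lemma inner_kker_left {θ : Circ → ℂ} (j : ℕ) {u : L2} (hu : u ∈ Kmodel θ) :
    ⟪kker θ j, u⟫ = (j.factorial : ℂ) * ⟪e (j : ℤ), u⟫ := by
  rw [kker_def, inner_Pmod_left, Pmod_of_mem hu, inner_smul_left, map_natCast]

lemma inner_kker_right {θ : Circ → ℂ} (j : ℕ) {u : L2} (hu : u ∈ Kmodel θ) :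
    ⟪u, kker θ j⟫ = (j.factorial : ℂ) * ⟪u, e (j : ℤ)⟫ := by
  rw [kker_def, ← inner_Pmod_left, Pmod_of_mem hu, inner_smul_right]

end Aux6

section Main
open ComplexConjugate Filter

local notation "⟪" x ", " y "⟫" => @inner ℂ _ _ x y

/-- for l < k, the rank-one operators k̃_0^β ⊗ k_{0,l}^α and
k_0^β ⊗ k̃_{0,l}^α belong to 𝒮_k(α,β), with explicit symbols
φ = β(z^k)·l!·conj(z)^{l+k} and ψ = conj(α)·l!·z^{l+1}. -/
theorem rank_one_in_Sk (k : ℕ) (hk : 1 ≤ k) (α β : Circ → ℂ)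
    (hα : IsInnerFun α) (hβ : IsInnerFun β)
    (W : L2 →L[ℂ] L2) (hW : IsSlantShift k W)
    (Cα Cβ : L2 → L2) (hCα : IsConjOp α Cα) (hCβ : IsConjOp β Cβ)
    (l : ℕ) (hl : l < k) :
    (MemLp (fun x : Circ => β ((k : ℤ) • x) * (l.factorial : ℂ) *
        (starRingEnd ℂ) (fourier ((l : ℤ) + (k : ℤ)) x)) 2 μc ∧
      UphiRel W α β (fun x => β ((k : ℤ) • x) * (l.factorial : ℂ) *
        (starRingEnd ℂ) (fourier ((l : ℤ) + (k : ℤ)) x))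
        (rankOne (Cβ (kker β 0)) (kker α l))) ∧
    (MemLp (fun x : Circ =>
        (starRingEnd ℂ) (α x) * (l.factorial : ℂ) * fourier ((l : ℤ) + 1) x) 2 μc ∧
      UphiRel W α β (fun x =>
        (starRingEnd ℂ) (α x) * (l.factorial : ℂ) * fourier ((l : ℤ) + 1) x)
        (rankOne (kker β 0) (Cα (kker α l)))) := by
  have hβmod := hβ.2.1
  have hαmod := hα.2.1
  constructor
  · constructor
    · -- MemLp of φ
      have m1 : MemLp (fun x : Circ => β ((k : ℤ) • x)) 2 μc :=
        (hβ.1.comp_measurePreserving (mpk k hk)).mono_exponent le_top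
      have m2 : MemLp (fun x : Circ =>
          β ((k : ℤ) • x) * conj (fourier ((l : ℤ) + (k : ℤ)) x)) 2 μc := by
        refine memℒp_unimod_mul_right ?_ ?_ m1
        · exact (Complex.continuous_conj.comp
            (map_continuous (fourier ((l : ℤ) + (k : ℤ))))).aestronglyMeasurable
        · filter_upwards with x
          rw [RCLike.norm_conj]; exact norm_fourier _ x
      exact (m2.const_mul ((l.factorial : ℂ))).ae_eq
        (Eventually.of_forall fun x => by ring)
    · -- UphiRel, part 1
      intro f hf hfb g hg
      have hψm : MemLp (fun x => fourier (l : ℤ) x * conj (f x)) 2 μc :=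
        memℒp_unimod_mul_left (map_continuous (fourier (l : ℤ))).aestronglyMeasurable
          (Eventually.of_forall fun x => norm_fourier _ x) (memℒp_conj (Lp.memLp f))
      set ψ' : L2 := hψm.toLp _ with hψ'def
      have hψc : ⇑ψ' =ᵐ[μc] fun x => fourier (l : ℤ) x * conj (f x) := hψm.coeFn_toLp
      have hUf : (rankOne (Cβ (kker β 0)) (kker α l)) f
          = ⟪kker α l, f⟫ • (Cβ (kker β 0)) := by
        simp [rankOne, ContinuousLinearMap.toSpanSingleton_apply]
      rw [hUf]
      refine (Pmod_eq (Submodule.smul_mem _ _ (C_mem_Kmodel hβ hCβ (kker_mem β 0))) ?_).symm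
      intro w hw
      have hh : Cβ w ∈ Kmodel β := C_mem_Kmodel hβ hCβ hw
      rw [inner_W hk hW w g]
      have hmain : ⟪Wst k hk w, g⟫ = (l.factorial : ℂ) * ⟪ψ', Wst k hk (Cβ w)⟫ := by
        rw [inner_eq_int, inner_eq_int, ← integral_const_mul]
        apply integral_congr_ae
        have hB1 : (fun y => conj (w y) * β y) =ᵐ[μc] fun y => fourier 1 y * (Cβ w) y := by
          filter_upwards [hCβ w] with y hy
          rw [hy]
          simp only [map_mul]
          have he1 : fourier 1 y * conj (fourier 1 y) = 1 := fourier_mul_conj_self 1 y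
          linear_combination (-(conj (w y) * β y)) * he1
        have hcomp := ae_comp_k k hk hB1
        filter_upwards [Wst_coe k hk w, hg, Wst_coe k hk (Cβ w), hψc, hcomp]
          with x h1 h2 h3 h4 h5
        rw [h1, h2, h3, h4]
        have h5' : conj (w ((k : ℤ) • x)) * β ((k : ℤ) • x)
            = fourier (k : ℤ) x * (Cβ w) ((k : ℤ) • x) := by
          have h6 : fourier 1 ((k : ℤ) • x) = fourier (k : ℤ) x := by
            rw [fourier_ksmul, mul_one]
          rw [← h6]; exact h5
        have hrel : fourier (k : ℤ) x * fourier (-((l : ℤ) + (k : ℤ))) x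
            = fourier (-(l : ℤ)) x := by
          rw [← fourier_add]; congr 1; ring
        simp only [map_mul, Complex.conj_conj, ← fourier_neg]
        linear_combination ((l.factorial : ℂ) * f x * fourier (-((l : ℤ) + (k : ℤ))) x) * h5'
          + ((l.factorial : ℂ) * f x * (Cβ w) ((k : ℤ) • x)) * hrel
      rw [hmain, key_sum k hk hl hf.1 hψc hh.1]
      rw [inner_smul_right]
      have hc : ⟪kker α l, f⟫ = (l.factorial : ℂ) * ⟪e (l : ℤ), f⟫ :=
        inner_kker_left l hf
      have hv : ⟪w, Cβ (kker β 0)⟫ = ⟪e (0 : ℤ), Cβ w⟫ := by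
        calc ⟪w, Cβ (kker β 0)⟫ = ⟪Cβ (Cβ w), Cβ (kker β 0)⟫ := by rw [C_C hβmod hCβ w]
          _ = ⟪kker β 0, Cβ w⟫ := inner_C_C hβmod hCβ _ _
          _ = ⟪e (0 : ℤ), Cβ w⟫ := by
              have h9 := inner_kker_left 0 hh
              norm_num [Nat.factorial] at h9
              exact h9
      rw [hc, hv]
      ring
  · constructor
    · -- MemLp of ψ
      have m1 : MemLp (fun x : Circ => conj (α x)) 2 μc :=
        (memℒp_conj hα.1).mono_exponent le_top
      have m2 : MemLp (fun x : Circ => conj (α x) * fourier ((l : ℤ) + 1) x) 2 μc :=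
        memℒp_unimod_mul_right (map_continuous (fourier ((l : ℤ) + 1))).aestronglyMeasurable
          (Eventually.of_forall fun x => norm_fourier _ x) m1
      exact (m2.const_mul ((l.factorial : ℂ))).ae_eq
        (Eventually.of_forall fun x => by ring)
    · -- UphiRel, part 2
      intro f hf hfb g hg
      have hh' : Cα f ∈ Kmodel α := C_mem_Kmodel hα hCα hf
      have hψm : MemLp (fun x => fourier (l : ℤ) x * conj ((Cα f) x)) 2 μc :=
        memℒp_unimod_mul_left (map_continuous (fourier (l : ℤ))).aestronglyMeasurable
          (Eventually.of_forall fun x => norm_fourier _ x) (memℒp_conj (Lp.memLp (Cα f)))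
      set ψ' : L2 := hψm.toLp _ with hψ'def
      have hψc : ⇑ψ' =ᵐ[μc] fun x => fourier (l : ℤ) x * conj ((Cα f) x) := hψm.coeFn_toLp
      have hUf : (rankOne (kker β 0) (Cα (kker α l))) f
          = ⟪Cα (kker α l), f⟫ • (kker β 0) := by
        simp [rankOne, ContinuousLinearMap.toSpanSingleton_apply]
      rw [hUf]
      refine (Pmod_eq (Submodule.smul_mem _ _ (kker_mem β 0)) ?_).symm
      intro w hw
      rw [inner_W hk hW w g]
      have hmain : ⟪Wst k hk w, g⟫
          = (l.factorial : ℂ) * conj (⟪ψ', Wst k hk w⟫) := by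
        rw [inner_eq_int, inner_eq_int, ← integral_conj, ← integral_const_mul]
        apply integral_congr_ae
        filter_upwards [Wst_coe k hk w, hg, hψc, hCα f] with x h1 h2 h4 h5
        rw [h1, h2, h4, h5]
        simp only [map_mul, Complex.conj_conj]
        have hadd : fourier ((l : ℤ) + 1) x = fourier (l : ℤ) x * fourier 1 x := fourier_add
        rw [hadd]
        ring
      rw [hmain, key_sum k hk hl hh'.1 hψc hw.1]
      rw [inner_smul_right]
      have hkb : ⟪w, kker β 0⟫ = conj ⟪e (0 : ℤ), w⟫ := by
        have h9 := inner_kker_right 0 hw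
        norm_num [Nat.factorial] at h9
        rw [h9, ← inner_conj_symm]
      have hc2 : ⟪Cα (kker α l), f⟫ = (l.factorial : ℂ) * conj ⟪e (l : ℤ), Cα f⟫ := by
        calc ⟪Cα (kker α l), f⟫ = ⟪Cα (kker α l), Cα (Cα f)⟫ := by rw [C_C hαmod hCα f]
          _ = ⟪Cα f, kker α l⟫ := inner_C_C hαmod hCα _ _
          _ = conj ⟪kker α l, Cα f⟫ := (inner_conj_symm _ _).symm
          _ = (l.factorial : ℂ) * conj ⟪e (l : ℤ), Cα f⟫ := by
              rw [inner_kker_left l hh', map_mul, map_natCast]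
      rw [hkb, hc2, map_mul]
      ring

end Main
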